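/- Let X be an abelian group with automorphism t : X → X such that 1−t is also an automorphism. Let G be the quotient of the free abelian group ℤ⟨X×X⟩ by the subgroup generated by the elements (a,(1−t)a), (a,0), (0,a) for all a ∈ X, and the elements (x,z) − (x,y) − (tx+y, z) + (tx+z, ty+(1−t)z) for all x,y,z ∈ X; write [a,b] for the class of (a,b) in G. Then [t x, t y] = [x, y] in G for all x, y ∈ X. -/
import Mathlib


open FreeAbelianGroup TensorProduct

/-- **Lemma.** In the group `G` (the quotient of `ℤ⟨X × X⟩` by the stated
relations, with bracket `br a b = [a, b]`), one has `[t x, t y] = [x, y]`. -/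
theorem bracket_t_invariance
    {X : Type*} [AddCommGroup X] (t : X ≃+ X)
    (ht : Function.Bijective fun x : X => x - t x)
    (Rel : AddSubgroup (FreeAbelianGroup (X × X)))
    (hRel : Rel = AddSubgroup.closure
      ({z | ∃ a : X, z = of (a, a - t a)} ∪ {z | ∃ a : X, z = of (a, (0 : X))} ∪
        {z | ∃ a : X, z = of ((0 : X), a)} ∪
        {z | ∃ x y w : X, z = of (x, w) - of (x, y) - of (t x + y, w)
          + of (t x + w, t y + (w - t w))}))
    (br : X → X → FreeAbelianGroup (X × X) ⧸ Rel)
    (hbr : ∀ a b : X, br a b = QuotientAddGroup.mk (of (a, b)))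
    : ∀ x y : X, br (t x) (t y) = br x y := by
  intro x y
  rw [hbr, hbr, QuotientAddGroup.eq_iff_sub_mem, hRel]
  have h1 : of (x, (0:X)) ∈ AddSubgroup.closure
      ({z | ∃ a : X, z = of (a, a - t a)} ∪ {z | ∃ a : X, z = of (a, (0 : X))} ∪
        {z | ∃ a : X, z = of ((0 : X), a)} ∪
        {z | ∃ x y w : X, z = of (x, w) - of (x, y) - of (t x + y, w)
          + of (t x + w, t y + (w - t w))}) :=
    AddSubgroup.subset_closure (Or.inl (Or.inl (Or.inr ⟨x, rfl⟩)))
  have h2 : of (t x + y, (0:X)) ∈ AddSubgroup.closure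
      ({z | ∃ a : X, z = of (a, a - t a)} ∪ {z | ∃ a : X, z = of (a, (0 : X))} ∪
        {z | ∃ a : X, z = of ((0 : X), a)} ∪
        {z | ∃ x y w : X, z = of (x, w) - of (x, y) - of (t x + y, w)
          + of (t x + w, t y + (w - t w))}) :=
    AddSubgroup.subset_closure (Or.inl (Or.inl (Or.inr ⟨t x + y, rfl⟩)))
  have h4 : of (x, (0:X)) - of (x, y) - of (t x + y, (0:X)) + of (t x, t y)
      ∈ AddSubgroup.closure
      ({z | ∃ a : X, z = of (a, a - t a)} ∪ {z | ∃ a : X, z = of (a, (0 : X))} ∪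
        {z | ∃ a : X, z = of ((0 : X), a)} ∪
        {z | ∃ x y w : X, z = of (x, w) - of (x, y) - of (t x + y, w)
          + of (t x + w, t y + (w - t w))}) :=
    AddSubgroup.subset_closure (Or.inr ⟨x, y, 0, by simp⟩)
  have := AddSubgroup.add_mem _ (AddSubgroup.sub_mem _ h4 h1) h2
  convert this using 1
  abel
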